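/- Let Q_n(y) = ∑_{j=0}^{n} 2^{n-j} y^j/j!. For all y ≥ 0 and integers l ≥ 1: (y²/((2l+2)(2l+1))) Q_{2l}(y) ≤ Q_{2l+2}(y), and (2l+3)²/((2l+1)(l+2)) ≤ 3. -/

import Mathlib

open Finset

/-- The polynomial `Q_n(y) = ∑_{j=0}^n 2^{n-j} y^j / j!`. -/
noncomputable def Q (n : ℕ) (y : ℝ) : ℝ :=
  ∑ j ∈ Finset.range (n + 1), 2 ^ (n - j) * y ^ j / (j.factorial : ℝ)

theorem stmt_14 (y : ℝ) (hy : 0 ≤ y) (l : ℕ) (hl : 1 ≤ l) :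
    y ^ 2 / ((2 * (l:ℝ) + 2) * (2 * (l:ℝ) + 1)) * Q (2 * l) y ≤ Q (2 * l + 2) y ∧
      (2 * (l:ℝ) + 3) ^ 2 / ((2 * (l:ℝ) + 1) * ((l:ℝ) + 2)) ≤ 3 := by
  constructor
  · have h1 : y ^ 2 / ((2 * (l:ℝ) + 2) * (2 * (l:ℝ) + 1)) * Q (2 * l) y
        = ∑ j ∈ Finset.range (2*l+1),
            y^2 / ((2*(l:ℝ)+2)*(2*(l:ℝ)+1)) * (2 ^ (2*l - j) * y ^ j / (j.factorial : ℝ)) := by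
      rw [Q, Finset.mul_sum]
    rw [h1]
    have h2 : ∀ j ∈ Finset.range (2*l+1),
        y^2 / ((2*(l:ℝ)+2)*(2*(l:ℝ)+1)) * (2 ^ (2*l - j) * y ^ j / (j.factorial : ℝ))
        ≤ 2 ^ ((2*l+2) - (j+2)) * y ^ (j+2) / ((j+2).factorial : ℝ) := by
      intro j hj
      rw [Finset.mem_range] at hj
      have hj' : j ≤ 2*l := Nat.lt_succ_iff.mp hj
      have hs : (2*l+2) - (j+2) = 2*l - j := by omega
      rw [hs]
      have heq : y^2 / ((2*(l:ℝ)+2)*(2*(l:ℝ)+1)) * (2 ^ (2*l - j) * y ^ j / (j.factorial : ℝ))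
          = 2 ^ (2*l - j) * y ^ (j+2) / ((2*(l:ℝ)+2)*(2*(l:ℝ)+1) * (j.factorial : ℝ)) := by
        field_simp
        ring
      rw [heq]
      have hnum : (0:ℝ) ≤ 2 ^ (2*l - j) * y ^ (j+2) := by positivity
      have hfact : (0:ℝ) < ((j+2).factorial : ℝ) := by positivity
      have hle : ((j+2).factorial : ℝ) ≤ (2*(l:ℝ)+2)*(2*(l:ℝ)+1) * (j.factorial : ℝ) := by
        have : ((j+2).factorial : ℝ) = ((j:ℝ)+2)*((j:ℝ)+1)*(j.factorial : ℝ) := by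
          rw [Nat.factorial_succ, Nat.factorial_succ]
          push_cast
          ring
        rw [this]
        have hjr : (j:ℝ) ≤ 2*(l:ℝ) := by exact_mod_cast hj'
        have hf1 : (1:ℝ) ≤ (j.factorial : ℝ) := by exact_mod_cast Nat.one_le_iff_ne_zero.mpr (Nat.factorial_ne_zero j)
        have hj0 : (0:ℝ) ≤ (j:ℝ) := Nat.cast_nonneg j
        have key : ((j:ℝ)+2)*((j:ℝ)+1) ≤ (2*(l:ℝ)+2)*(2*(l:ℝ)+1) := by nlinarith
        have hfn : (0:ℝ) ≤ (j.factorial : ℝ) := by positivity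
        nlinarith [mul_le_mul_of_nonneg_right key hfn]
      exact div_le_div_of_nonneg_left hnum hfact hle
    calc ∑ j ∈ Finset.range (2*l+1),
            y^2 / ((2*(l:ℝ)+2)*(2*(l:ℝ)+1)) * (2 ^ (2*l - j) * y ^ j / (j.factorial : ℝ))
        ≤ ∑ j ∈ Finset.range (2*l+1),
            2 ^ ((2*l+2) - (j+2)) * y ^ (j+2) / ((j+2).factorial : ℝ) := Finset.sum_le_sum h2
      _ = ∑ j ∈ Finset.Ico 2 (2*l+3),
            2 ^ ((2*l+2) - j) * y ^ j / (j.factorial : ℝ) := by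
          rw [Finset.sum_Ico_eq_sum_range]
          have : 2*l+3-2 = 2*l+1 := by omega
          rw [this]
          exact Finset.sum_congr rfl fun i _ => by rw [Nat.add_comm 2 i]
      _ ≤ Q (2*l+2) y := by
          rw [Q]
          apply Finset.sum_le_sum_of_subset_of_nonneg
          · intro x hx
            simp only [Finset.mem_Ico, Finset.mem_range] at *
            omega
          · intro i _ _
            positivity
  · rw [div_le_iff₀ (by positivity)]
    have hlr : (1:ℝ) ≤ (l:ℝ) := by exact_mod_cast hl
    nlinarith
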